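/- The minimum number of particles in a recurrent configuration on the complete graph K_n (with one vertex as sink) is (n-1)(n-2)/2 and the maximum is (n-1)(n-2); hence the minimum density of a recurrent configuration is (n-2)/2 and the maximum density is n-2, where density is total particles divided by the n-1 non-sink vertices. -/

import Mathlib

open Finset

/-- A sandpile configuration on the complete graph `K_n` with one sink: the `n − 1`
non-sink vertices carry `c v` particles.  It is stable if every non-sink vertex
holds at most `n − 2` particles, and recurrent if moreover it passes Dhar's burning
test: for every nonempty set `S` of non-sink vertices, some vertex of `S` holds at
least as many particles as its number of neighbors within `S` (which in `K_n` is
`|S| − 1`). -/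
def KRecurrent (n : ℕ) (c : Fin (n - 1) → ℕ) : Prop :=
  (∀ v, c v ≤ n - 2) ∧
  ∀ S : Finset (Fin (n - 1)), S.Nonempty → ∃ v ∈ S, S.card - 1 ≤ c v

lemma krec_lower (n : ℕ) (hn : 2 ≤ n) (c : Fin (n - 1) → ℕ)
    (hc : KRecurrent n c) :
    (n - 1) * (n - 2) / 2 ≤ ∑ v, c v := by
  classical
  set N := n - 2 with hN
  have key : ∀ j, N - j ≤ (univ.filter (fun v => j < c v)).card := by
    intro j
    have hT : (univ.filter (fun v : Fin (n-1) => c v ≤ j)).card ≤ j + 1 := by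
      by_cases h : (univ.filter (fun v : Fin (n-1) => c v ≤ j)).Nonempty
      · obtain ⟨v, hv, hle⟩ := hc.2 _ h
        simp only [mem_filter] at hv
        omega
      · simp [not_nonempty_iff_eq_empty.mp h]
    have hsplit := Finset.card_filter_add_card_filter_not
      (s := (univ : Finset (Fin (n-1)))) (p := fun v => j < c v)
    have hcard : (univ : Finset (Fin (n-1))).card = n - 1 := by simp
    simp only [not_lt] at hsplit
    omega
  have step1 : ∑ j ∈ range N, (N - j) ≤
      ∑ j ∈ range N, (univ.filter (fun v => j < c v)).card :=
    Finset.sum_le_sum fun j _ => key j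
  have step2 : ∑ j ∈ range N, (univ.filter (fun v => j < c v)).card
      = ∑ v, ((range N).filter (fun j => j < c v)).card := by
    simp only [Finset.card_filter]
    exact Finset.sum_comm
  have step3 : ∑ v, ((range N).filter (fun j => j < c v)).card ≤ ∑ v, c v := by
    refine Finset.sum_le_sum fun v _ => ?_
    calc ((range N).filter (fun j => j < c v)).card ≤ (range (c v)).card := by
          apply Finset.card_le_card
          intro j hj
          simp only [mem_filter, mem_range] at hj ⊢
          exact hj.2
      _ = c v := Finset.card_range _
  have hgauss : (∑ j ∈ range (N+1), j) * 2 = (N+1) * N := Finset.sum_range_id_mul_two _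
  have hrefl : ∑ j ∈ range N, (N - j) = ∑ j ∈ range N, (j + 1) := by
    rw [← Finset.sum_range_reflect]
    refine Finset.sum_congr rfl fun j hj => ?_
    simp only [mem_range] at hj
    omega
  have hsum1 : ∑ j ∈ range N, (j + 1) = ∑ j ∈ range (N+1), j := by
    rw [Finset.sum_range_succ_comm]
    simp [Finset.sum_add_distrib, Nat.add_comm]
  have hmn : (n - 1) * (n - 2) = (N + 1) * N := by
    congr 1
    omega
  rw [hmn]
  have := step1.trans (step2.le.trans step3)
  rw [hrefl, hsum1] at this
  generalize hP : (N + 1) * N = P at hgauss ⊢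
  omega

lemma krec_upper (n : ℕ) (c : Fin (n - 1) → ℕ) (hc : KRecurrent n c) :
    ∑ v, c v ≤ (n - 1) * (n - 2) := by
  calc ∑ v, c v ≤ ∑ _v : Fin (n-1), (n - 2) := Finset.sum_le_sum fun v _ => hc.1 v
    _ = (n - 1) * (n - 2) := by simp [Finset.sum_const, mul_comm]

lemma krec_min_mem (n : ℕ) (hn : 2 ≤ n) :
    KRecurrent n (fun v : Fin (n-1) => (v : ℕ)) := by
  constructor
  · intro v
    show (v : ℕ) ≤ n - 2
    have := v.isLt
    omega
  · intro S hS
    refine ⟨S.max' hS, S.max'_mem hS, ?_⟩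
    show S.card - 1 ≤ ((S.max' hS : Fin (n-1)) : ℕ)
    have hsub : S.image Fin.val ⊆ range ((S.max' hS : ℕ) + 1) := by
      intro j hj
      simp only [mem_image, mem_range] at hj ⊢
      obtain ⟨w, hw, rfl⟩ := hj
      have := S.le_max' w hw
      exact Nat.lt_succ_of_le this
    have := Finset.card_le_card hsub
    rw [Finset.card_image_of_injective _ Fin.val_injective, Finset.card_range] at this
    omega

lemma krec_min_sum (n : ℕ) :
    ∑ v : Fin (n-1), (v : ℕ) = (n - 1) * (n - 2) / 2 := by
  rw [Fin.sum_univ_eq_sum_range (fun i => i)]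
  have hgauss : (∑ j ∈ range (n-1), j) * 2 = (n-1) * (n-1-1) := Finset.sum_range_id_mul_two _
  rw [Nat.sub_sub] at hgauss
  norm_num at hgauss
  generalize hP : (n-1) * (n-2) = P at hgauss ⊢
  omega

lemma krec_max_mem (n : ℕ) :
    KRecurrent n (fun _ : Fin (n-1) => n - 2) := by
  refine ⟨fun _ => le_rfl, fun S hS => ⟨hS.choose, hS.choose_spec, ?_⟩⟩
  show S.card - 1 ≤ n - 2
  have h1 : S.card ≤ (univ : Finset (Fin (n-1))).card := Finset.card_le_univ S
  have h2 : (univ : Finset (Fin (n-1))).card = n - 1 := by simp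
  omega

lemma krec_max_sum (n : ℕ) :
    ∑ _v : Fin (n-1), (n - 2) = (n - 1) * (n - 2) := by
  simp [Finset.sum_const, mul_comm]

lemma cast_half (n : ℕ) (hn : 2 ≤ n) :
    (((n - 1) * (n - 2) / 2 : ℕ) : ℚ) = ((n : ℚ) - 1) * ((n : ℚ) - 2) / 2 := by
  have heven : 2 ∣ (n - 1) * (n - 2) := by
    have h := Nat.even_mul_succ_self (n - 2)
    rw [show n - 2 + 1 = n - 1 by omega] at h
    rw [mul_comm]
    exact h.two_dvd
  have h2 : ((n - 1) * (n - 2) / 2 : ℕ) * 2 = (n - 1) * (n - 2) := Nat.div_mul_cancel heven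
  have := congrArg (fun k : ℕ => (k : ℚ)) h2
  push_cast [Nat.cast_sub (by omega : 1 ≤ n), Nat.cast_sub hn] at this
  linarith

lemma cast_full (n : ℕ) (hn : 2 ≤ n) :
    (((n - 1) * (n - 2) : ℕ) : ℚ) = ((n : ℚ) - 1) * ((n : ℚ) - 2) := by
  push_cast [Nat.cast_sub (by omega : 1 ≤ n), Nat.cast_sub hn]
  ring

/-- On `K_n` with one sink, the minimum number of particles in a recurrent
configuration is `(n−1)(n−2)/2` and the maximum is `(n−1)(n−2)`; hence the minimum
density (total particles divided by the `n − 1` non-sink vertices) is `(n−2)/2`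
and the maximum density is `n − 2`. -/
theorem complete_graph_recurrent_extremes (n : ℕ) (hn : 2 ≤ n) :
    IsLeast {t : ℕ | ∃ c : Fin (n - 1) → ℕ, KRecurrent n c ∧ t = ∑ v, c v}
      ((n - 1) * (n - 2) / 2) ∧
    IsGreatest {t : ℕ | ∃ c : Fin (n - 1) → ℕ, KRecurrent n c ∧ t = ∑ v, c v}
      ((n - 1) * (n - 2)) ∧
    IsLeast {q : ℚ | ∃ c : Fin (n - 1) → ℕ, KRecurrent n c ∧
        q = (∑ v, (c v : ℚ)) / (n - 1)} (((n : ℚ) - 2) / 2) ∧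
    IsGreatest {q : ℚ | ∃ c : Fin (n - 1) → ℕ, KRecurrent n c ∧
        q = (∑ v, (c v : ℚ)) / (n - 1)} ((n : ℚ) - 2) := by
  have hn1 : (0 : ℚ) < (n : ℚ) - 1 := by
    have : (2 : ℚ) ≤ (n : ℚ) := by exact_mod_cast hn
    linarith
  have hcast : ∀ c : Fin (n-1) → ℕ, (∑ v, (c v : ℚ)) = ((∑ v, c v : ℕ) : ℚ) := by
    intro c; push_cast; rfl
  refine ⟨⟨⟨fun v => (v : ℕ), krec_min_mem n hn, (krec_min_sum n).symm⟩,
      fun t ⟨c, hc, ht⟩ => ht ▸ krec_lower n hn c hc⟩,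
    ⟨⟨fun _ => n - 2, krec_max_mem n, (krec_max_sum n).symm⟩,
      fun t ⟨c, hc, ht⟩ => ht ▸ krec_upper n c hc⟩, ?_, ?_⟩
  · constructor
    · refine ⟨fun v => (v : ℕ), krec_min_mem n hn, ?_⟩
      rw [hcast, krec_min_sum n, cast_half n hn]
      first
      | (field_simp; ring)
      | field_simp
    · rintro q ⟨c, hc, rfl⟩
      rw [hcast]
      have hle : (((n - 1) * (n - 2) / 2 : ℕ) : ℚ) ≤ ((∑ v, c v : ℕ) : ℚ) := by
        exact_mod_cast krec_lower n hn c hc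
      have : (((n : ℚ) - 2) / 2) = (((n - 1) * (n - 2) / 2 : ℕ) : ℚ) / ((n : ℚ) - 1) := by
        rw [cast_half n hn]
        field_simp
      rw [this]
      gcongr
  · constructor
    · refine ⟨fun _ => n - 2, krec_max_mem n, ?_⟩
      rw [hcast, krec_max_sum n, cast_full n hn]
      first
      | (field_simp; ring)
      | field_simp
    · rintro q ⟨c, hc, rfl⟩
      rw [hcast]
      have hle : ((∑ v, c v : ℕ) : ℚ) ≤ (((n - 1) * (n - 2) : ℕ) : ℚ) := by
        exact_mod_cast krec_upper n c hc
      have : ((n : ℚ) - 2) = (((n - 1) * (n - 2) : ℕ) : ℚ) / ((n : ℚ) - 1) := by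
        rw [cast_full n hn]
        first
        | (field_simp; ring)
        | field_simp
      rw [this]
      gcongr
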